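/- Let A = (A_1, ..., A_n) be real numbers with A_k > -1 for all k. Then ∫_{B} |x_1|^{A_1} |x_2|^{A_2} ⋯ |x_n|^{A_n} dx = (∏_{k=1}^n Γ((A_k+1)/2)) / Γ(D/2 + 1), where D = n + ∑_{k=1}^n A_k and B is the closed unit Euclidean ball in ℝ^n. -/

import Mathlib

open MeasureTheory Real Metric

/-- The monomial `|x|^A = ∏ |x_k|^{A_k}`. -/
noncomputable def monom {n : ℕ} (A : Fin n → ℝ) (x : EuclideanSpace ℝ (Fin n)) : ℝ :=
  ∏ k, |x k| ^ (A k)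

/-- The normalizing constant `K_B(A)` for the unit ball. -/
noncomputable def ballK (n : ℕ) (A : Fin n → ℝ) : ℝ :=
  (∏ k, Real.Gamma ((A k + 1) / 2)) /
    Real.Gamma (((n : ℝ) + ∑ k, A k) / 2 + 1)

open Set ENNReal

section aux

lemma monom_nonneg {n : ℕ} (A : Fin n → ℝ) (x : EuclideanSpace ℝ (Fin n)) : 0 ≤ monom A x :=
  Finset.prod_nonneg fun _ _ => Real.rpow_nonneg (abs_nonneg _) _

lemma measurable_monom {n : ℕ} (A : Fin n → ℝ) : Measurable (monom A) := by
  unfold monom; measurability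

lemma monom_smul {n : ℕ} (A : Fin n → ℝ) {t : ℝ} (ht : 0 < t) (x : EuclideanSpace ℝ (Fin n)) :
    monom A (t • x) = t ^ (∑ k, A k) * monom A x := by
  unfold monom
  rw [Real.rpow_sum_of_pos ht, ← Finset.prod_mul_distrib]
  refine Finset.prod_congr rfl fun k _ => ?_
  have h : (t • x) k = t * x k := rfl
  rw [h, abs_mul, abs_of_pos ht, Real.mul_rpow ht.le (abs_nonneg _)]

lemma integrable_comp_abs' {f : ℝ → ℝ} (hf : IntegrableOn f (Ioi 0)) :
    Integrable fun x => f |x| := by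
  have int_Ioi : IntegrableOn (fun x => f |x|) (Ioi 0) := by
    refine hf.congr_fun (fun x hx => ?_) measurableSet_Ioi
    rw [abs_of_pos hx]
  have int_Iic : IntegrableOn (fun x => f |x|) (Iic 0) := by
    rw [← Measure.map_neg_eq_self (volume : Measure ℝ)]
    have m : MeasurableEmbedding fun x : ℝ => -x := (Homeomorph.neg ℝ).measurableEmbedding
    rw [m.integrableOn_map_iff]
    simp_rw [Function.comp_def, abs_neg, neg_preimage, neg_Iic, neg_zero]
    exact Iff.mpr integrableOn_Ici_iff_integrableOn_Ioi int_Ioi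
  rw [← integrableOn_univ, ← Iic_union_Ioi (a := (0:ℝ))]
  exact int_Iic.union int_Ioi

lemma ioi_rpow_exp_sq {a : ℝ} :
    (∫ x in Ioi (0:ℝ), x ^ a * Real.exp (-x ^ 2))
      = ∫ x in Ioi (0:ℝ), x ^ a * Real.exp (-x ^ (2:ℝ)) := by
  refine setIntegral_congr_fun measurableSet_Ioi (fun x hx => ?_)
  have : x ^ (2:ℝ) = x ^ (2:ℕ) := by
    rw [← Real.rpow_natCast x 2]; norm_num
  rw [this]

lemma integrable_abs_rpow_mul_exp_neg_sq' {a : ℝ} (ha : -1 < a) :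
    Integrable (fun t : ℝ => |t| ^ a * Real.exp (-t ^ 2)) := by
  have h : IntegrableOn (fun x : ℝ => x ^ a * Real.exp (-x ^ 2)) (Ioi 0) := by
    have := integrableOn_rpow_mul_exp_neg_mul_sq (b := 1) one_pos ha
    simpa using this
  have := integrable_comp_abs' h
  refine this.congr (Filter.Eventually.of_forall fun x => ?_)
  simp only [sq_abs]

lemma integral_abs_rpow_mul_exp_neg_sq' {a : ℝ} (ha : -1 < a) :
    ∫ t : ℝ, |t| ^ a * Real.exp (-t ^ 2) = Real.Gamma ((a + 1) / 2) := by
  have : ∀ t : ℝ, |t| ^ a * Real.exp (-t ^ 2) = (fun s => s ^ a * Real.exp (-s ^ 2)) |t| := by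
    intro t; simp [sq_abs]
  simp_rw [this]
  rw [integral_comp_abs (f := fun s => s ^ a * Real.exp (-s ^ 2)), ioi_rpow_exp_sq,
    integral_rpow_mul_exp_neg_rpow two_pos ha]
  ring

set_option maxHeartbeats 1000000 in
lemma gauss_lintegral {n : ℕ} (A : Fin n → ℝ) (hA : ∀ k, -1 < A k) :
    ∫⁻ x : EuclideanSpace ℝ (Fin n), ENNReal.ofReal (monom A x * Real.exp (-‖x‖ ^ 2)) =
      ENNReal.ofReal (∏ k, Real.Gamma ((A k + 1) / 2)) := by
  have key : ∀ x : EuclideanSpace ℝ (Fin n),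
      monom A x * Real.exp (-‖x‖ ^ 2) = ∏ k, (|x k| ^ (A k) * Real.exp (-(x k) ^ 2)) := by
    intro x
    have hn : ‖x‖ ^ 2 = ∑ k, (x k) ^ 2 := by
      rw [EuclideanSpace.norm_eq, Real.sq_sqrt (Finset.sum_nonneg fun k _ => sq_nonneg _)]
      simp [sq_abs]
    rw [hn, Finset.prod_mul_distrib, ← Real.exp_sum]
    simp [monom, Finset.sum_neg_distrib]
  simp_rw [key]
  have h := EuclideanSpace.volume_preserving_symm_measurableEquiv_toLp (Fin n)
  rw [show (∫⁻ x : EuclideanSpace ℝ (Fin n),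
        ENNReal.ofReal (∏ k, (|x k| ^ (A k) * Real.exp (-(x k) ^ 2)))) =
      ∫⁻ y : Fin n → ℝ, ENNReal.ofReal (∏ k, (|y k| ^ (A k) * Real.exp (-(y k) ^ 2))) by
    rw [← h.lintegral_comp (by measurability)]; rfl]
  have hint : Integrable (fun y : Fin n → ℝ => ∏ k, (|y k| ^ (A k) * Real.exp (-(y k) ^ 2))) :=
    Integrable.fintype_prod (𝕜 := ℝ) fun k => integrable_abs_rpow_mul_exp_neg_sq' (hA k)
  rw [← ofReal_integral_eq_lintegral_ofReal hint (Filter.Eventually.of_forall fun y =>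
    Finset.prod_nonneg fun k _ =>
      mul_nonneg (Real.rpow_nonneg (abs_nonneg _) _) (Real.exp_pos _).le)]
  rw [MeasureTheory.volume_pi]
  rw [integral_fintype_prod_eq_prod (𝕜 := ℝ) (ι := Fin n)
    (fun k t => |t| ^ (A k) * Real.exp (-t ^ 2))]
  congr 1
  exact Finset.prod_congr rfl fun k _ => integral_abs_rpow_mul_exp_neg_sq' (hA k)

set_option maxHeartbeats 1000000 in
lemma polar_lintegral {n : ℕ} (A : Fin n → ℝ) (hn : 0 < n) {w : ℝ → ℝ≥0∞} (hw : Measurable w) :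
    ∫⁻ x : EuclideanSpace ℝ (Fin n), ENNReal.ofReal (monom A x) * w ‖x‖ =
      (∫⁻ y : sphere (0 : EuclideanSpace ℝ (Fin n)) 1,
          ENNReal.ofReal (monom A y.1)
          ∂(volume : Measure (EuclideanSpace ℝ (Fin n))).toSphere) *
        ∫⁻ r in Ioi (0 : ℝ),
          ENNReal.ofReal (r ^ (n - 1 : ℕ)) * (ENNReal.ofReal (r ^ (∑ k, A k)) * w r) := by
  set E := EuclideanSpace ℝ (Fin n) with hE
  haveI : Nonempty (Fin n) := ⟨⟨0, hn⟩⟩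
  haveI : Nontrivial E := inferInstanceAs (Nontrivial (PiLp 2 fun _ : Fin n => ℝ))
  set a := ∑ k, A k with ha
  set F : E → ℝ≥0∞ := fun x => ENNReal.ofReal (monom A x) * w ‖x‖ with hF
  set G : sphere (0 : E) 1 × Ioi (0 : ℝ) → ℝ≥0∞ := fun p =>
    ENNReal.ofReal (monom A p.1.1) * (ENNReal.ofReal (p.2.1 ^ a) * w p.2.1) with hG
  have hGm : Measurable G := by
    apply Measurable.mul
    · exact ((measurable_monom A).comp (measurable_subtype_coe.comp measurable_fst)).ennreal_ofReal
    · apply Measurable.mul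
      · apply Measurable.ennreal_ofReal
        have h : Measurable fun t : ℝ => t ^ a := by measurability
        exact h.comp (measurable_subtype_coe.comp measurable_snd)
      · exact hw.comp (measurable_subtype_coe.comp measurable_snd)
  have step1 : ∫⁻ x : E, F x = ∫⁻ x in ({0}ᶜ : Set E), F x := by
    rw [← setLIntegral_univ]
    refine (setLIntegral_congr ?_).symm
    rw [ae_eq_univ]
    simp
  have step2 : ∫⁻ x in ({0}ᶜ : Set E), F x
      = ∫⁻ x : ({0}ᶜ : Set E), F x.1 ∂((volume : Measure E).comap Subtype.val) := by
    rw [lintegral_subtype_comap (measurableSet_singleton (0:E)).compl]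
  have key : ∀ x : ({0}ᶜ : Set E), F x.1 = G (homeomorphUnitSphereProd E x) := by
    rintro ⟨x, hx⟩
    have hx0 : x ≠ 0 := hx
    have hnorm : 0 < ‖x‖ := norm_pos_iff.mpr hx0
    have hxr : x = ‖x‖ • (‖x‖⁻¹ • x) := by
      rw [smul_smul, mul_inv_cancel₀ hnorm.ne', one_smul]
    have hmon : monom A x = ‖x‖ ^ a * monom A (‖x‖⁻¹ • x) := by
      conv_lhs => rw [hxr]
      rw [monom_smul A hnorm]
    simp only [hG, hF, homeomorphUnitSphereProd_apply_fst_coe,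
      homeomorphUnitSphereProd_apply_snd_coe]
    rw [hmon, ENNReal.ofReal_mul (Real.rpow_nonneg hnorm.le _)]
    ring
  have step3 : ∫⁻ x : ({0}ᶜ : Set E), F x.1 ∂((volume : Measure E).comap Subtype.val)
      = ∫⁻ p, G p ∂(((volume : Measure E).toSphere).prod
          (Measure.volumeIoiPow (Module.finrank ℝ E - 1))) := by
    rw [← (volume : Measure E).measurePreserving_homeomorphUnitSphereProd.lintegral_comp hGm]
    exact lintegral_congr key
  have step4 : ∫⁻ p, G p ∂(((volume : Measure E).toSphere).prod
          (Measure.volumeIoiPow (Module.finrank ℝ E - 1)))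
      = (∫⁻ y : sphere (0:E) 1, ENNReal.ofReal (monom A y.1) ∂(volume : Measure E).toSphere) *
        ∫⁻ r : Ioi (0:ℝ), (ENNReal.ofReal (r.1 ^ a) * w r.1)
          ∂(Measure.volumeIoiPow (Module.finrank ℝ E - 1)) := by
    have h1 : Measurable fun y : sphere (0:E) 1 => ENNReal.ofReal (monom A y.1) :=
      ((measurable_monom A).comp measurable_subtype_coe).ennreal_ofReal
    have hpow : Measurable fun t : ℝ => t ^ a := by measurability
    have h2 : Measurable fun r : Ioi (0:ℝ) => ENNReal.ofReal (r.1 ^ a) * w r.1 :=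
      ((hpow.comp measurable_subtype_coe).ennreal_ofReal).mul (hw.comp measurable_subtype_coe)
    exact lintegral_prod_mul h1.aemeasurable h2.aemeasurable
  have hrank : Module.finrank ℝ E - 1 = n - 1 := by
    show Module.finrank ℝ (EuclideanSpace ℝ (Fin n)) - 1 = n - 1
    rw [finrank_euclideanSpace_fin]
  have step5 : ∫⁻ r : Ioi (0:ℝ), (ENNReal.ofReal (r.1 ^ a) * w r.1)
          ∂(Measure.volumeIoiPow (Module.finrank ℝ E - 1))
      = ∫⁻ r in Ioi (0:ℝ), ENNReal.ofReal (r ^ (n - 1 : ℕ)) *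
          (ENNReal.ofReal (r ^ a) * w r) := by
    rw [hrank, Measure.volumeIoiPow]
    rw [lintegral_withDensity_eq_lintegral_mul _
      (by
        apply Measurable.ennreal_ofReal
        exact (measurable_subtype_coe.pow_const _))
      (by
        have hpow : Measurable fun t : ℝ => t ^ a := by measurability
        exact ((hpow.comp measurable_subtype_coe).ennreal_ofReal).mul
          (hw.comp measurable_subtype_coe))]
    calc ∫⁻ r : Ioi (0:ℝ), ((fun r : Ioi (0:ℝ) => ENNReal.ofReal (r.1 ^ (n - 1 : ℕ))) *
            fun r : Ioi (0:ℝ) => ENNReal.ofReal (r.1 ^ a) * w r.1) r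
            ∂(Measure.comap Subtype.val volume)
        = ∫⁻ r : Ioi (0:ℝ), (fun t : ℝ => ENNReal.ofReal (t ^ (n - 1 : ℕ)) *
            (ENNReal.ofReal (t ^ a) * w t)) r.1 ∂(Measure.comap Subtype.val volume) :=
          lintegral_congr fun r => rfl
      _ = _ := lintegral_subtype_comap measurableSet_Ioi
            (fun t : ℝ => ENNReal.ofReal (t ^ (n - 1 : ℕ)) * (ENNReal.ofReal (t ^ a) * w t))
  rw [step1, step2, step3, step4, step5]

lemma radial_gauss {n : ℕ} (hn : 0 < n) {a : ℝ} (hD : 0 < (n:ℝ) + a) :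
    (∫⁻ r in Ioi (0:ℝ), ENNReal.ofReal (r ^ (n - 1 : ℕ)) *
        (ENNReal.ofReal (r ^ a) * ENNReal.ofReal (Real.exp (-r ^ 2)))) =
      ENNReal.ofReal (Real.Gamma (((n:ℝ) + a) / 2) / 2) := by
  set D : ℝ := (n:ℝ) + a with hD'
  have hcongr : ∀ r ∈ Ioi (0:ℝ), ENNReal.ofReal (r ^ (n - 1 : ℕ)) *
      (ENNReal.ofReal (r ^ a) * ENNReal.ofReal (Real.exp (-r ^ 2)))
      = ENNReal.ofReal (r ^ (D - 1) * Real.exp (-r ^ 2)) := by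
    intro r hr
    have hr : (0:ℝ) < r := hr
    have h1 : (r : ℝ) ^ (n - 1 : ℕ) = r ^ ((n:ℝ) - 1) := by
      rw [← Real.rpow_natCast r (n-1), Nat.cast_sub hn, Nat.cast_one]
    have h2 : r ^ ((n:ℝ) - 1) * r ^ a = r ^ (D - 1) := by
      rw [← Real.rpow_add hr, hD']; ring_nf
    rw [h1, ← ENNReal.ofReal_mul (Real.rpow_nonneg hr.le _),
      ← ENNReal.ofReal_mul (Real.rpow_nonneg hr.le _), ← mul_assoc, h2]
  rw [setLIntegral_congr_fun measurableSet_Ioi hcongr]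
  have hint : IntegrableOn (fun r : ℝ => r ^ (D - 1) * Real.exp (-r ^ 2)) (Ioi 0) := by
    have := integrableOn_rpow_mul_exp_neg_mul_sq (b := 1) one_pos (s := D - 1) (by linarith)
    simpa using this
  rw [← ofReal_integral_eq_lintegral_ofReal hint]
  · rw [ioi_rpow_exp_sq, integral_rpow_mul_exp_neg_rpow two_pos (by linarith)]
    norm_num [sub_add_cancel]
    ring_nf
    rw [← ENNReal.ofReal_mul (by norm_num)]; ring_nf
  · filter_upwards [ae_restrict_mem measurableSet_Ioi] with r hr
    exact mul_nonneg (Real.rpow_nonneg (le_of_lt hr) _) (Real.exp_pos _).le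

lemma radial_ball {n : ℕ} (hn : 0 < n) {a : ℝ} (hD : 0 < (n:ℝ) + a) :
    (∫⁻ r in Ioi (0:ℝ), ENNReal.ofReal (r ^ (n - 1 : ℕ)) *
        (ENNReal.ofReal (r ^ a) * (Iic (1:ℝ)).indicator (fun _ => (1:ℝ≥0∞)) r)) =
      ENNReal.ofReal (1 / ((n:ℝ) + a)) := by
  set D : ℝ := (n:ℝ) + a with hD'
  have hcongr : ∀ r ∈ Ioi (0:ℝ), ENNReal.ofReal (r ^ (n - 1 : ℕ)) *
      (ENNReal.ofReal (r ^ a) * (Iic (1:ℝ)).indicator (fun _ => (1:ℝ≥0∞)) r)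
      = (Iic (1:ℝ)).indicator (fun r => ENNReal.ofReal (r ^ (D - 1))) r := by
    intro r hr
    have hr : (0:ℝ) < r := hr
    have h1 : (r : ℝ) ^ (n - 1 : ℕ) = r ^ ((n:ℝ) - 1) := by
      rw [← Real.rpow_natCast r (n-1), Nat.cast_sub hn, Nat.cast_one]
    have h2 : r ^ ((n:ℝ) - 1) * r ^ a = r ^ (D - 1) := by
      rw [← Real.rpow_add hr, hD']; ring_nf
    by_cases h : r ∈ Iic (1:ℝ)
    · rw [Set.indicator_of_mem h, Set.indicator_of_mem h, mul_one, h1,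
        ← ENNReal.ofReal_mul (Real.rpow_nonneg hr.le _), h2]
    · rw [Set.indicator_of_notMem h, Set.indicator_of_notMem h, mul_zero, mul_zero]
  rw [setLIntegral_congr_fun measurableSet_Ioi hcongr,
    lintegral_indicator measurableSet_Iic, Measure.restrict_restrict measurableSet_Iic,
    Set.Iic_inter_Ioi]
  have hint : IntegrableOn (fun t : ℝ => t ^ (D - 1)) (Ioc 0 1) :=
    (intervalIntegrable_iff_integrableOn_Ioc_of_le zero_le_one).1
      (intervalIntegral.intervalIntegrable_rpow' (by linarith))
  rw [← ofReal_integral_eq_lintegral_ofReal hint]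
  · rw [← intervalIntegral.integral_of_le zero_le_one,
      integral_rpow (Or.inl (by linarith : (-1:ℝ) < D - 1))]
    rw [Real.one_rpow, Real.zero_rpow (by linarith : D - 1 + 1 ≠ 0)]
    norm_num
  · filter_upwards [ae_restrict_mem measurableSet_Ioc] with r hr
    exact Real.rpow_nonneg hr.1.le _

end aux

set_option maxHeartbeats 1000000 in
theorem ball_monomial_integral (n : ℕ) (A : Fin n → ℝ) (hA : ∀ k, -1 < A k) :
    ∫ x in closedBall (0 : EuclideanSpace ℝ (Fin n)) 1, monom A x =
      (∏ k, Real.Gamma ((A k + 1) / 2)) /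
        Real.Gamma (((n : ℝ) + ∑ k, A k) / 2 + 1) := by
  rcases Nat.eq_zero_or_pos n with h0 | hn
  · subst h0
    have hmon : ∀ x : EuclideanSpace ℝ (Fin 0), monom A x = 1 := by
      intro x; simp [monom]
    simp only [hmon]
    have hcb : closedBall (0 : EuclideanSpace ℝ (Fin 0)) 1 = Set.univ :=
      Set.eq_univ_of_forall fun x => by
        simp [mem_closedBall, Subsingleton.elim x 0]
    have hv : (volume : Measure (EuclideanSpace ℝ (Fin 0))) Set.univ = 1 := by
      have h := (EuclideanSpace.volume_preserving_symm_measurableEquiv_toLp (Fin 0)).measure_preimage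
        (MeasurableSet.univ.nullMeasurableSet)
      rw [Set.preimage_univ] at h
      rw [h, MeasureTheory.volume_pi, MeasureTheory.Measure.pi_univ]
      simp
    rw [setIntegral_const, hcb, Measure.real, hv]
    simp [Real.Gamma_one]
  · haveI : Nonempty (Fin n) := ⟨⟨0, hn⟩⟩
    set a := ∑ k, A k with ha
    have hD : 0 < (n:ℝ) + a := by
      have h := Finset.sum_lt_sum_of_nonempty (Finset.univ_nonempty (α := Fin n))
        (f := fun _ : Fin n => (-1:ℝ)) (g := A) (fun k _ => hA k)
      have h2 : (∑ _k : Fin n, (-1:ℝ)) = -(n:ℝ) := by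
        simp [Finset.sum_const, Finset.card_univ]
      rw [ha]; linarith [h2 ▸ h]
    set D : ℝ := (n:ℝ) + a with hDdef
    -- Gaussian weight
    set w₁ : ℝ → ℝ≥0∞ := fun r => ENNReal.ofReal (Real.exp (-r ^ 2)) with hw₁def
    have hw₁ : Measurable w₁ := by
      apply Measurable.ennreal_ofReal; measurability
    have h1 := polar_lintegral A hn hw₁
    have hgauss : (∫⁻ x : EuclideanSpace ℝ (Fin n), ENNReal.ofReal (monom A x) * w₁ ‖x‖) =
        ENNReal.ofReal (∏ k, Real.Gamma ((A k + 1) / 2)) := by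
      rw [← gauss_lintegral A hA]
      exact lintegral_congr fun x => (ENNReal.ofReal_mul (monom_nonneg A x)).symm
    rw [hgauss, radial_gauss hn hD] at h1
    -- Ball weight
    set w₂ : ℝ → ℝ≥0∞ := (Iic (1:ℝ)).indicator (fun _ => (1:ℝ≥0∞)) with hw₂def
    have hw₂ : Measurable w₂ := measurable_const.indicator measurableSet_Iic
    have h2 := polar_lintegral A hn hw₂
    have hball : (∫⁻ x : EuclideanSpace ℝ (Fin n), ENNReal.ofReal (monom A x) * w₂ ‖x‖) =
        ∫⁻ x in closedBall (0 : EuclideanSpace ℝ (Fin n)) 1, ENNReal.ofReal (monom A x) := by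
      rw [← lintegral_indicator (measurableSet_closedBall)]
      refine lintegral_congr fun x => ?_
      by_cases hx : ‖x‖ ≤ 1
      · rw [Set.indicator_of_mem (by rwa [mem_closedBall_zero_iff]),
          hw₂def, Set.indicator_of_mem (by exact hx), mul_one]
      · rw [Set.indicator_of_notMem (by rwa [mem_closedBall_zero_iff]),
          hw₂def, Set.indicator_of_notMem (by exact hx), mul_zero]
    rw [hball, radial_ball hn hD] at h2
    -- combine
    set S := (∫⁻ y : sphere (0 : EuclideanSpace ℝ (Fin n)) 1, ENNReal.ofReal (monom A y.1)
      ∂(volume : Measure (EuclideanSpace ℝ (Fin n))).toSphere) with hSdef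
    set Ball := ∫⁻ x in closedBall (0 : EuclideanSpace ℝ (Fin n)) 1,
      ENNReal.ofReal (monom A x) with hBdef
    have key : Ball * ENNReal.ofReal (Real.Gamma (D / 2) / 2)
        = ENNReal.ofReal (∏ k, Real.Gamma ((A k + 1) / 2)) * ENNReal.ofReal (1 / D) := by
      rw [h2, mul_right_comm, ← h1]
    have hΓD : 0 < Real.Gamma (D / 2) := Real.Gamma_pos_of_pos (by linarith)
    have hP : 0 ≤ ∏ k, Real.Gamma ((A k + 1) / 2) :=
      Finset.prod_nonneg fun k _ => (Real.Gamma_pos_of_pos (by linarith [hA k])).le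
    have htr := congrArg ENNReal.toReal key
    rw [ENNReal.toReal_mul, ← ENNReal.ofReal_mul hP, ENNReal.toReal_ofReal
        (by positivity), ENNReal.toReal_ofReal (by positivity)] at htr
    -- finish
    have hBt : (∫ x in closedBall (0 : EuclideanSpace ℝ (Fin n)) 1, monom A x)
        = Ball.toReal := by
      rw [hBdef, integral_eq_lintegral_of_nonneg_ae
        (Filter.Eventually.of_forall fun x => monom_nonneg A x)
        ((measurable_monom A).aestronglyMeasurable)]
    rw [hBt]
    rw [show ((n : ℝ) + ∑ k, A k) / 2 + 1 = D / 2 + 1 by rw [hDdef, ha]]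
    rw [Real.Gamma_add_one (by positivity : D / 2 ≠ 0)]
    rw [eq_div_iff (by positivity : D / 2 * Real.Gamma (D / 2) ≠ 0)]
    have hD0 : D ≠ 0 := ne_of_gt hD
    field_simp at htr
    linarith [htr]
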